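/- Let V have dimension 2p, let U have dimension p, let α : V × V → U be a symmetric bilinear map, and let β(X,Y) = (α(X,Y)+α(JX,JY), α(X,JY)-α(JX,Y)). Assume β is flat with respect to the signature-(p,p) bilinear form on U × U and that its kernel N(β) is zero. Let X ∈ V be such that the linear map B_X : Y ↦ β(X,Y) has nontrivial kernel and X ≠ 0, and set U₁ = π₁(B_X(V)) ⊆ U, where π₁ : U × U → U is the projection onto the first factor. Then B_X(V) = U₁ × U₁ and moreover B_X(V) = {β(Z,X) : Z ∈ V}. -/

import Mathlib

open Module

section Aux

variable {V W : Type*} [AddCommGroup V] [Module ℝ V] [FiniteDimensional ℝ V]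
  [AddCommGroup W] [Module ℝ W] [FiniteDimensional ℝ W]

theorem aux_main (β : V →ₗ[ℝ] V →ₗ[ℝ] W) (D : LinearMap.BilinForm ℝ W)
    (hDsymm : ∀ w w', D w w' = D w' w)
    (hDpos : ∀ w, 0 ≤ D w w)
    (hDdef : ∀ w, D w w = 0 → w = 0)
    (c : W →ₗ[ℝ] W) (hcc : ∀ w, c (c w) = w)
    (hβc : ∀ X Y, β Y X = c (β X Y))
    (hflat : ∀ X Y Z T, D (β X Y) (β T Z) = D (β X T) (β Y Z))
    (hN : ∀ Y : V, (∀ Z, β Z Y = 0) → Y = 0)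
    (hdim : finrank ℝ V = finrank ℝ W) (X : V) :
    Submodule.map c (LinearMap.range (β X)) = LinearMap.range (β X) := by
  classical
  -- basic consequences
  have hsymmzero : ∀ A B : V, β A B = 0 → β B A = 0 := by
    intro A B h; rw [hβc, h, map_zero]
  have hq : ∀ A B : V, D (β A B) (β A B) = D (β A A) (β B B) := fun A B => hflat A B B A
  have hqpos : ∀ A B : V, 0 ≤ D (β A A) (β B B) := fun A B => hq A B ▸ hDpos (β A B)
  have hzero_iff : ∀ A B : V, β A B = 0 ↔ D (β A A) (β B B) = 0 := by
    intro A B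
    constructor
    · intro h; rw [← hq, h]; simp
    · intro h; exact hDdef _ ((hq A B).trans h)
  have hqadd : ∀ A B : V, β A B = 0 → β (A + B) (A + B) = β A A + β B B := by
    intro A B h
    have h' := hsymmzero A B h
    simp only [map_add, LinearMap.add_apply, h, h', add_zero, zero_add]
  have hkersplit : ∀ A B : V, β A B = 0 → ∀ Z,
      β (A + B) Z = 0 ↔ β A Z = 0 ∧ β B Z = 0 := by
    intro A B h Z
    constructor
    · intro h0
      have e1 : D (β (A + B) (A + B)) (β Z Z) = 0 := (hzero_iff _ _).1 h0
      rw [hqadd A B h, map_add, LinearMap.add_apply] at e1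
      have p1 := hqpos A Z
      have p2 := hqpos B Z
      exact ⟨(hzero_iff A Z).2 (by linarith), (hzero_iff B Z).2 (by linarith)⟩
    · rintro ⟨h1, h2⟩
      rw [map_add, LinearMap.add_apply, h1, h2, add_zero]
  have hself : ∀ Y : V, Y ≠ 0 → β Y Y ≠ 0 := by
    intro Y hY h
    refine hY (hN Y fun Z => ?_)
    refine hDdef _ ?_
    rw [hq Z Y, h, map_zero]
  -- existence of a regular perturbation
  have exists_reg : ∀ X' : V, ∃ T, β X' T = 0 ∧ LinearMap.ker (β (X' + T)) = ⊥ := by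
    suffices H : ∀ n : ℕ, ∀ X' : V, finrank ℝ (LinearMap.ker (β X')) ≤ n →
        ∃ T, β X' T = 0 ∧ LinearMap.ker (β (X' + T)) = ⊥ by
      exact fun X' => H _ X' le_rfl
    intro n
    induction n with
    | zero =>
      intro X' h
      refine ⟨0, by simp, ?_⟩
      have : finrank ℝ (LinearMap.ker (β X')) = 0 := Nat.le_zero.mp h
      simpa using Submodule.finrank_eq_zero.mp this
    | succ n ih =>
      intro X' h
      by_cases hK : LinearMap.ker (β X') = ⊥
      · exact ⟨0, by simp, by simpa using hK⟩
      · obtain ⟨Y, hYmem, hY0⟩ := Submodule.ne_bot_iff _ |>.mp hK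
        have hXY : β X' Y = 0 := LinearMap.mem_ker.mp hYmem
        have hkereq : LinearMap.ker (β (X' + Y)) =
            LinearMap.ker (β X') ⊓ LinearMap.ker (β Y) := by
          ext Z
          simp only [LinearMap.mem_ker, Submodule.mem_inf]
          exact hkersplit X' Y hXY Z
        have hYnotin : Y ∉ LinearMap.ker (β (X' + Y)) := by
          rw [hkereq]
          intro hc
          exact hself Y hY0 (LinearMap.mem_ker.mp hc.2)
        have hlt : LinearMap.ker (β (X' + Y)) < LinearMap.ker (β X') := by
          rw [hkereq]
          exact lt_of_le_of_ne inf_le_left (fun he => hYnotin (by rw [hkereq, he]; exact hYmem))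
        have hfr : finrank ℝ (LinearMap.ker (β (X' + Y))) ≤ n := by
          have := Submodule.finrank_lt_finrank_of_lt hlt
          omega
        obtain ⟨T, hT1, hT2⟩ := ih (X' + Y) hfr
        have hXT : β X' T = 0 ∧ β Y T = 0 := (hkersplit X' Y hXY T).1 hT1
        refine ⟨Y + T, ?_, ?_⟩
        · rw [map_add, hXY, hXT.1, add_zero]
        · rwa [← add_assoc]
  -- the regular element X + T
  obtain ⟨T, hXT, hker0⟩ := exists_reg X
  set S := LinearMap.range (β X) with hS
  set ST := LinearMap.range (β T) with hST
  have hrefl : D.IsRefl := fun w w' h => by rw [hDsymm]; exact h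
  have hnondeg : D.Nondegenerate := ⟨fun w h => hDdef w (h w), fun w h => hDdef w (h w)⟩
  -- range of β T is orthogonal to S
  have hST_orth : ST ≤ D.orthogonal S := by
    rintro w ⟨Z, rfl⟩ n ⟨Y, rfl⟩
    show D (β X Y) (β T Z) = 0
    rw [hflat X Y Z T, hXT, map_zero, LinearMap.zero_apply]
  -- β (X + T) is surjective
  have hrange_top : LinearMap.range (β (X + T)) = ⊤ :=
    (LinearMap.ker_eq_bot_iff_range_eq_top_of_finrank_eq_finrank hdim).mp hker0
  have hsup : S ⊔ ST = ⊤ := by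
    refine le_antisymm le_top ?_
    rw [← hrange_top]
    rintro w ⟨Y, rfl⟩
    rw [map_add, LinearMap.add_apply]
    exact Submodule.add_mem_sup (LinearMap.mem_range_self _ Y) (LinearMap.mem_range_self _ Y)
  -- dimension bookkeeping
  have hfrOrth : finrank ℝ (D.orthogonal S) = finrank ℝ W - finrank ℝ S :=
    LinearMap.BilinForm.finrank_orthogonal hnondeg S
  have hSle : finrank ℝ S ≤ finrank ℝ W := Submodule.finrank_le S
  have hsum : finrank ℝ W ≤ finrank ℝ S + finrank ℝ ST := by
    have h1 := Submodule.finrank_sup_add_finrank_inf_eq S ST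
    rw [hsup] at h1
    have h2 : finrank ℝ (⊤ : Submodule ℝ W) = finrank ℝ W := finrank_top ℝ W
    omega
  have hSTeq : ST = D.orthogonal S := by
    refine Submodule.eq_of_le_of_finrank_le hST_orth ?_
    omega
  -- the two kernels
  have hV12 : LinearMap.ker (β T) ⊓ LinearMap.ker (β X) = ⊥ := by
    rw [← hker0]
    refine le_antisymm ?_ ?_
    · intro Z hZ
      have h1 : β T Z = 0 := LinearMap.mem_ker.mp (Submodule.mem_inf.mp hZ).1
      have h2 : β X Z = 0 := LinearMap.mem_ker.mp (Submodule.mem_inf.mp hZ).2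
      rw [LinearMap.mem_ker, map_add, LinearMap.add_apply, h1, h2, add_zero]
    · rw [hker0]; exact bot_le
  have hfrk : ∀ A : V, finrank ℝ (LinearMap.range (β A)) + finrank ℝ (LinearMap.ker (β A))
      = finrank ℝ V := fun A => LinearMap.finrank_range_add_finrank_ker (β A)
  have hVsup : LinearMap.ker (β T) ⊔ LinearMap.ker (β X) = ⊤ := by
    apply Submodule.eq_top_of_finrank_eq
    have h1 := Submodule.finrank_sup_add_finrank_inf_eq (LinearMap.ker (β T)) (LinearMap.ker (β X))
    rw [hV12, finrank_bot, add_zero] at h1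
    have h2 := hfrk T
    have h3 := hfrk X
    have h4 : finrank ℝ ST = finrank ℝ W - finrank ℝ S := by rw [hSTeq, hfrOrth]
    have h5 : finrank ℝ ↥(LinearMap.ker (β T) ⊔ LinearMap.ker (β X)) ≤ finrank ℝ V :=
      Submodule.finrank_le _
    have e1 : finrank ℝ ↥ST = finrank ℝ ↥(LinearMap.range (β T)) := rfl
    have e2 : finrank ℝ ↥S = finrank ℝ ↥(LinearMap.range (β X)) := rfl
    omega
  -- the core fact : β maps (ker β T) × (ker β T) into S
  have hcore : ∀ Y₁ ∈ LinearMap.ker (β T), ∀ Y₂ ∈ LinearMap.ker (β T), β Y₁ Y₂ ∈ S := by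
    intro Y₁ h₁ Y₂ h₂
    have horth : β Y₁ Y₂ ∈ D.orthogonal ST := by
      rintro n ⟨Z, rfl⟩
      show D (β T Z) (β Y₁ Y₂) = 0
      rw [hDsymm, hflat Y₁ Y₂ Z T, hsymmzero T Y₁ (LinearMap.mem_ker.mp h₁), map_zero,
        LinearMap.zero_apply]
    rwa [hSTeq, LinearMap.BilinForm.orthogonal_orthogonal hnondeg hrefl] at horth
  have hXinV₁ : X ∈ LinearMap.ker (β T) := LinearMap.mem_ker.mpr (hsymmzero X T hXT)
  -- every β Y X lies in S
  have hflipS : ∀ Y : V, β Y X ∈ S := by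
    intro Y
    have hmem : Y ∈ LinearMap.ker (β T) ⊔ LinearMap.ker (β X) := hVsup ▸ Submodule.mem_top
    obtain ⟨Y₁, hY₁, Y₂, hY₂, rfl⟩ := Submodule.mem_sup.mp hmem
    have h2 : β Y₂ X = 0 := hsymmzero X Y₂ (LinearMap.mem_ker.mp hY₂)
    rw [map_add, LinearMap.add_apply, h2, add_zero]
    exact hcore Y₁ hY₁ X hXinV₁
  -- conclude
  have hle : Submodule.map c S ≤ S := by
    rintro w ⟨v, ⟨Y, rfl⟩, rfl⟩
    rw [← hβc X Y]
    exact hflipS Y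
  refine le_antisymm hle ?_
  have : Submodule.map c (Submodule.map c S) = S := by
    have hid : c ∘ₗ c = LinearMap.id := LinearMap.ext hcc
    rw [← Submodule.map_comp, hid, Submodule.map_id]
  calc S = Submodule.map c (Submodule.map c S) := this.symm
    _ ≤ Submodule.map c S := Submodule.map_mono hle

end Aux

open Module RealInnerProductSpace

/-- If `β` is flat with trivial kernel, `X ≠ 0` and `B_X` has nontrivial kernel,
then with `U₁ = π₁(B_X(V))` one has `B_X(V) = U₁ ⊕ U₁ = {β(Z,X) : Z ∈ V}`. -/
theorem stmt_12
    {V U : Type*} [AddCommGroup V] [Module ℝ V] [FiniteDimensional ℝ V]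
    [NormedAddCommGroup U] [InnerProductSpace ℝ U] [FiniteDimensional ℝ U]
    (p : ℕ) (hV : finrank ℝ V = 2 * p) (hU : finrank ℝ U = p)
    (J : V →ₗ[ℝ] V) (hJ : ∀ v : V, J (J v) = -v)
    (α : V →ₗ[ℝ] V →ₗ[ℝ] U) (hα : ∀ X Y : V, α X Y = α Y X)
    (β : V →ₗ[ℝ] V →ₗ[ℝ] (U × U))
    (hβ : ∀ X Y : V, β X Y = (α X Y + α (J X) (J Y), α X (J Y) - α (J X) Y))
    (hflat : ∀ X Y Z T : V,
      ⟪(β X Y).1, (β Z T).1⟫ - ⟪(β X Y).2, (β Z T).2⟫ =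
        ⟪(β X T).1, (β Z Y).1⟫ - ⟪(β X T).2, (β Z Y).2⟫)
    (hker : (⨅ X : V, LinearMap.ker (β X)) = ⊥)
    (X : V) (hX : X ≠ 0) (hkerX : LinearMap.ker (β X) ≠ ⊥)
    (U₁ : Submodule ℝ U)
    (hU₁ : U₁ = Submodule.map (LinearMap.fst ℝ U U) (LinearMap.range (β X))) :
    LinearMap.range (β X) = U₁.prod U₁ ∧
      LinearMap.range (β X) = LinearMap.range (β.flip X) := by
  classical
  -- the positive definite bilinear form on U × U
  set D : LinearMap.BilinForm ℝ (U × U) := LinearMap.mk₂ ℝ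
      (fun w w' => (inner ℝ w.1 w'.1 + inner ℝ w.2 w'.2 : ℝ))
      (fun m₁ m₂ n => by simp [inner_add_left]; ring)
      (fun a m n => by simp [real_inner_smul_left]; ring)
      (fun m n₁ n₂ => by simp [inner_add_right]; ring)
      (fun a m n => by simp [real_inner_smul_right]; ring) with hDdef0
  have hDapply : ∀ w w' : U × U, D w w' = ⟪w.1, w'.1⟫ + ⟪w.2, w'.2⟫ := fun _ _ => rfl
  -- the conjugation
  set c : (U × U) →ₗ[ℝ] U × U := (LinearMap.fst ℝ U U).prod (-(LinearMap.snd ℝ U U)) with hcdef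
  have hcapply : ∀ w : U × U, c w = (w.1, -w.2) := fun _ => rfl
  have hcc : ∀ w : U × U, c (c w) = w := by
    intro w; simp [hcapply]
  have hβc : ∀ X' Y : V, β Y X' = c (β X' Y) := by
    intro X' Y
    rw [hβ, hβ, hcapply]
    refine Prod.ext ?_ ?_
    · show α Y X' + α (J Y) (J X') = α X' Y + α (J X') (J Y)
      rw [hα Y X', hα (J Y) (J X')]
    · show α Y (J X') - α (J Y) X' = -(α X' (J Y) - α (J X') Y)
      rw [hα Y (J X'), hα (J Y) X']; abel
  have hDsymm : ∀ w w' : U × U, D w w' = D w' w := by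
    intro w w'; rw [hDapply, hDapply, real_inner_comm w.1, real_inner_comm w.2]
  have hDpos : ∀ w : U × U, 0 ≤ D w w := by
    intro w; rw [hDapply]
    exact add_nonneg real_inner_self_nonneg real_inner_self_nonneg
  have hDzero : ∀ w : U × U, D w w = 0 → w = 0 := by
    intro w hw
    rw [hDapply] at hw
    have h1 : (⟪w.1, w.1⟫ : ℝ) = 0 := by
      have := real_inner_self_nonneg (x := w.1); have := real_inner_self_nonneg (x := w.2); linarith
    have h2 : (⟪w.2, w.2⟫ : ℝ) = 0 := by
      have := real_inner_self_nonneg (x := w.1); linarith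
    have e1 : w.1 = 0 := inner_self_eq_zero.mp h1
    have e2 : w.2 = 0 := inner_self_eq_zero.mp h2
    exact Prod.ext e1 e2
  have hflatD : ∀ X' Y Z T : V, D (β X' Y) (β T Z) = D (β X' T) (β Y Z) := by
    intro X' Y Z T
    have e1 : (β T Z).1 = (β Z T).1 := by rw [hβc Z T, hcapply]
    have e2 : (β T Z).2 = -(β Z T).2 := by rw [hβc Z T, hcapply]
    have e3 : (β Z Y).1 = (β Y Z).1 := by rw [hβc Y Z, hcapply]
    have e4 : (β Z Y).2 = -(β Y Z).2 := by rw [hβc Y Z, hcapply]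
    have h0 := hflat X' Y Z T
    rw [e3, e4, inner_neg_right] at h0
    rw [hDapply, hDapply, e1, e2, inner_neg_right]
    linarith [h0]
  have hN : ∀ Y : V, (∀ Z : V, β Z Y = 0) → Y = 0 := by
    intro Y h
    have hmem : Y ∈ (⨅ X' : V, LinearMap.ker (β X')) :=
      Submodule.mem_iInf _ |>.mpr fun X' => LinearMap.mem_ker.mpr (h X')
    rw [hker] at hmem
    simpa using hmem
  have hdim : finrank ℝ V = finrank ℝ (U × U) := by
    rw [Module.finrank_prod, hU, hV]; ring
  have hmap := aux_main β D hDsymm hDpos hDzero c hcc hβc hflatD hN hdim X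
  set S := LinearMap.range (β X) with hSdef
  -- second conclusion
  have hflipeq : LinearMap.range (β.flip X) = Submodule.map c S := by
    have he : β.flip X = c ∘ₗ β X := LinearMap.ext fun Y => by
      rw [LinearMap.flip_apply, LinearMap.comp_apply, hβc]
    rw [he, LinearMap.range_comp]
  have hconc2 : S = LinearMap.range (β.flip X) := by rw [hflipeq, hmap]
  -- rotation invariance of S
  have hrot : ∀ w ∈ S, ((-w.2, w.1) : U × U) ∈ S := by
    rintro w ⟨Y, rfl⟩
    refine ⟨-(J Y), ?_⟩
    rw [map_neg, hβ, hβ]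
    refine Prod.ext ?_ ?_
    · show -(α X (J Y) + α (J X) (J (J Y))) = -(α X (J Y) - α (J X) Y)
      rw [hJ Y, map_neg]; abel
    · show -(α X (J (J Y)) - α (J X) (J Y)) = α X Y + α (J X) (J Y)
      rw [hJ Y, map_neg]; abel
  have hcmem : ∀ w ∈ S, ((w.1, -w.2) : U × U) ∈ S := by
    intro w hw
    have : c w ∈ Submodule.map c S := Submodule.mem_map_of_mem hw
    rw [hmap] at this
    rwa [hcapply] at this
  constructor
  · rw [hU₁]
    apply le_antisymm
    · intro s hs
      refine Submodule.mem_prod.mpr ⟨⟨s, hs, rfl⟩, ?_⟩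
      have h1 : ((-s.2, s.1) : U × U) ∈ S := hrot s hs
      have h2 : ((-s.2, -s.1) : U × U) ∈ S := by
        have := hcmem _ h1; simpa using this
      have h3 : ((s.2, s.1) : U × U) ∈ S := by
        have := S.neg_mem h2; simpa using this
      exact ⟨(s.2, s.1), h3, rfl⟩
    · rintro ⟨u, v⟩ huv
      obtain ⟨hu, hv⟩ := Submodule.mem_prod.mp huv
      obtain ⟨s, hs, hs1⟩ := hu
      obtain ⟨t, ht, ht1⟩ := hv
      simp only [LinearMap.fst_apply] at hs1 ht1
      change s.1 = u at hs1
      change t.1 = v at ht1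
      have hu0 : ((u, 0) : U × U) ∈ S := by
        have h1 : ((s.1, -s.2) : U × U) ∈ S := hcmem s hs
        have h2 := S.smul_mem ((2:ℝ)⁻¹) (S.add_mem hs h1)
        have e : ((2:ℝ)⁻¹) • (s + (s.1, -s.2)) = ((u, 0) : U × U) := by
          refine Prod.ext ?_ ?_
          · show ((2:ℝ)⁻¹) • (s.1 + s.1) = u
            rw [← hs1, ← two_smul ℝ s.1, smul_smul]; norm_num
          · show ((2:ℝ)⁻¹) • (s.2 + -s.2) = (0 : U)
            simp
        rwa [e] at h2
      have hv0 : ((v, 0) : U × U) ∈ S := by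
        have h1 : ((t.1, -t.2) : U × U) ∈ S := hcmem t ht
        have h2 := S.smul_mem ((2:ℝ)⁻¹) (S.add_mem ht h1)
        have e : ((2:ℝ)⁻¹) • (t + (t.1, -t.2)) = ((v, 0) : U × U) := by
          refine Prod.ext ?_ ?_
          · show ((2:ℝ)⁻¹) • (t.1 + t.1) = v
            rw [← ht1, ← two_smul ℝ t.1, smul_smul]; norm_num
          · show ((2:ℝ)⁻¹) • (t.2 + -t.2) = (0 : U)
            simp
        rwa [e] at h2
      have h0v : ((0, v) : U × U) ∈ S := by
        have := hrot _ hv0; simpa using this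
      have := S.add_mem hu0 h0v
      simpa using this
  · exact hconc2
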